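/- Let n, q, r be positive integers with q < n, let B be a real n×q matrix of full column rank, and let R : ℝ^{n×q} → ℝ^r be a linear map. If the linear map K ↦ (B·Kᵀ + K·Bᵀ, R(K)) is injective, then there is a neighborhood U of B in ℝ^{n×q} such that every B̃ ∈ U with B̃B̃ᵀ = BBᵀ and R(B̃) = R(B) satisfies B̃ = B. -/

import Mathlib

open Matrix

section Aux

attribute [local instance] Matrix.normedAddCommGroup Matrix.normedSpace

theorem stmt_5_aux (n q r : ℕ) (hn : 0 < n) (hq : 0 < q) (hr : 0 < r) (hqn : q < n)
    (B : Matrix (Fin n) (Fin q) ℝ) (hB : B.rank = q)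
    (R : Matrix (Fin n) (Fin q) ℝ →ₗ[ℝ] (Fin r → ℝ))
    (J : Matrix (Fin n) (Fin q) ℝ →ₗ[ℝ] (Matrix (Fin n) (Fin n) ℝ × (Fin r → ℝ)))
    (hJ : ∀ K, J K = (B * Kᵀ + K * Bᵀ, R K))
    (hinj : Function.Injective J) :
    ∃ U ∈ nhds B, ∀ B' ∈ U, B' * B'ᵀ = B * Bᵀ → R B' = R B → B' = B := by
  classical
  set F : Matrix (Fin n) (Fin q) ℝ → Matrix (Fin n) (Fin n) ℝ × (Fin r → ℝ) :=
    fun X => (X * Xᵀ, R X) with hF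
  let J' : Matrix (Fin n) (Fin q) ℝ →L[ℝ] Matrix (Fin n) (Fin n) ℝ × (Fin r → ℝ) :=
    LinearMap.toContinuousLinearMap J
  have hJ' : ∀ K, J' K = J K := fun K => rfl
  -- bilinear map (X, Y) ↦ X * Yᵀ as a nested continuous linear map
  let m₀ : Matrix (Fin n) (Fin q) ℝ →ₗ[ℝ] Matrix (Fin n) (Fin q) ℝ →ₗ[ℝ]
      Matrix (Fin n) (Fin n) ℝ :=
    LinearMap.mk₂ ℝ (fun X Y => X * Yᵀ)
      (fun X X' Y => Matrix.add_mul _ _ _)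
      (fun c X Y => Matrix.smul_mul _ _ _)
      (fun X Y Y' => by
        show X * (Y + Y')ᵀ = X * Yᵀ + X * Y'ᵀ
        rw [Matrix.transpose_add, Matrix.mul_add])
      (fun c X Y => by
        show X * (c • Y)ᵀ = c • (X * Yᵀ)
        rw [Matrix.transpose_smul, Matrix.mul_smul])
  let m : Matrix (Fin n) (Fin q) ℝ →L[ℝ] Matrix (Fin n) (Fin q) ℝ →L[ℝ]
      Matrix (Fin n) (Fin n) ℝ :=
    LinearMap.toContinuousLinearMap
      ((LinearMap.toContinuousLinearMap :
          (Matrix (Fin n) (Fin q) ℝ →ₗ[ℝ] Matrix (Fin n) (Fin n) ℝ) ≃ₗ[ℝ]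
          (Matrix (Fin n) (Fin q) ℝ →L[ℝ] Matrix (Fin n) (Fin n) ℝ)).toLinearMap.comp m₀)
  have hm : ∀ X Y, m X Y = X * Yᵀ := fun X Y => rfl
  have hquad : HasStrictFDerivAt (fun X : Matrix (Fin n) (Fin q) ℝ => X * Xᵀ)
      (m.precompR (Matrix (Fin n) (Fin q) ℝ) B
          (ContinuousLinearMap.id ℝ (Matrix (Fin n) (Fin q) ℝ))
        + m.precompL (Matrix (Fin n) (Fin q) ℝ)
          (ContinuousLinearMap.id ℝ (Matrix (Fin n) (Fin q) ℝ)) B) B := by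
    exact m.hasStrictFDerivAt_of_bilinear (hasStrictFDerivAt_id B) (hasStrictFDerivAt_id B)
  have hR : HasStrictFDerivAt (fun X : Matrix (Fin n) (Fin q) ℝ => R X)
      (LinearMap.toContinuousLinearMap R) B :=
    (LinearMap.toContinuousLinearMap R).hasStrictFDerivAt
  have h := HasStrictFDerivAt.prodMk hquad hR
  have hd : ((m.precompR (Matrix (Fin n) (Fin q) ℝ) B
          (ContinuousLinearMap.id ℝ (Matrix (Fin n) (Fin q) ℝ))
        + m.precompL (Matrix (Fin n) (Fin q) ℝ)
          (ContinuousLinearMap.id ℝ (Matrix (Fin n) (Fin q) ℝ)) B).prod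
        (LinearMap.toContinuousLinearMap R)) = J' := by
    refine ContinuousLinearMap.ext fun K => ?_
    rw [ContinuousLinearMap.prod_apply, ContinuousLinearMap.add_apply]; change _ = J K; rw [hJ K]
    refine Prod.ext ?_ rfl
    show m B K + m K B = B * Kᵀ + K * Bᵀ
    rw [hm, hm]
  have hFd : HasStrictFDerivAt F J' B := hd ▸ h
  obtain ⟨c, hc0, hcanti⟩ := (J.injective_iff_antilipschitz).mp hinj
  have hcne : c ≠ 0 := ne_of_gt hc0
  obtain ⟨s, hs, happ⟩ := hFd.approximates_deriv_on_nhds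
    (Or.inr (by positivity : (0:NNReal) < c⁻¹ / 2))
  refine ⟨s, hs, fun B' hB' h1 h2 => ?_⟩
  have hBs : B ∈ s := mem_of_mem_nhds hs
  have hFeq : F B' = F B := by simp [hF, h1, h2]
  have h3 : ‖F B' - F B - J' (B' - B)‖ ≤ (c⁻¹ / 2 : NNReal) * ‖B' - B‖ :=
    happ B' hB' B hBs
  rw [hFeq, sub_self, zero_sub, norm_neg] at h3
  have h4 : ‖B' - B‖ ≤ (c : ℝ) * ‖J' (B' - B)‖ := by
    have := hcanti.le_mul_dist B' B
    simpa [dist_eq_norm, hJ', ← map_sub] using this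
  have h5 : ‖B' - B‖ ≤ (c : ℝ) * ((c⁻¹ / 2 : NNReal) * ‖B' - B‖) :=
    h4.trans (by exact mul_le_mul_of_nonneg_left h3 c.coe_nonneg)
  have hcc : (c : ℝ) * ((c⁻¹ / 2 : NNReal) : ℝ) = 1 / 2 := by
    rw [NNReal.coe_div, NNReal.coe_inv]
    have : (c:ℝ) ≠ 0 := by exact_mod_cast hcne
    field_simp
    norm_num
  have h6 : ‖B' - B‖ ≤ (1 / 2) * ‖B' - B‖ := by
    calc ‖B' - B‖ ≤ (c : ℝ) * ((c⁻¹ / 2 : NNReal) * ‖B' - B‖) := h5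
    _ = ((c : ℝ) * ((c⁻¹ / 2 : NNReal) : ℝ)) * ‖B' - B‖ := by ring
    _ = (1 / 2) * ‖B' - B‖ := by rw [hcc]
  have h7 : ‖B' - B‖ ≤ 0 := by nlinarith [norm_nonneg (B' - B)]
  have h8 := le_antisymm h7 (norm_nonneg _)
  rwa [norm_eq_zero, sub_eq_zero] at h8

end Aux

/-- Local identifiability of `B` in the SVAR setting with `A₀ = I`:
if `K ↦ (B·Kᵀ + K·Bᵀ, R(K))` is injective, then `B` is locally the unique matrix
with `B̃B̃ᵀ = BBᵀ` satisfying the restrictions. -/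
theorem stmt_5 (n q r : ℕ) (hn : 0 < n) (hq : 0 < q) (hr : 0 < r) (hqn : q < n)
    (B : Matrix (Fin n) (Fin q) ℝ) (hB : B.rank = q)
    (R : Matrix (Fin n) (Fin q) ℝ →ₗ[ℝ] (Fin r → ℝ))
    (J : Matrix (Fin n) (Fin q) ℝ →ₗ[ℝ] (Matrix (Fin n) (Fin n) ℝ × (Fin r → ℝ)))
    (hJ : ∀ K, J K = (B * Kᵀ + K * Bᵀ, R K))
    (hinj : Function.Injective J) :
    ∃ U ∈ nhds B, ∀ B' ∈ U, B' * B'ᵀ = B * Bᵀ → R B' = R B → B' = B := by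
  exact stmt_5_aux n q r hn hq hr hqn B hB R J hJ hinj
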